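/- arXiv:2402.09999 — 5 statements merged into one kernel-verified Lean document; each statement's English description precedes it below -/
import Mathlib

section
/- For a cyclic group C_n of order n and any positive integer r, the r-wise Davenport constant satisfies D_r(C_n) = r·n. -/
/-- `S` contains `r` pairwise disjoint nonempty zero-sum subsequences. -/
def HasDZS {G : Type*} [AddCommGroup G] (r : ℕ) (S : Multiset G) : Prop :=
  ∃ L : List (Multiset G), L.length = r ∧ (∀ T ∈ L, T ≠ 0 ∧ T.sum = 0) ∧ L.sum ≤ S

/-- The `r`-wise Davenport constant: the least `k > 0` such that every sequence of
length at least `k` over `G` has `r` pairwise disjoint nonempty zero-sum subsequences. -/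
noncomputable def DavR (G : Type*) [AddCommGroup G] (r : ℕ) : ℕ :=
  sInf {k | 0 < k ∧ ∀ S : Multiset G, k ≤ Multiset.card S → HasDZS r S}


lemma block_zs {n : ℕ} (hn : 0 < n) (l : List (ZMod n)) (hlen : n ≤ l.length)
    (i j : ℕ) (hij : i < j) (hjn : j ≤ n)
    (hsum : (l.take i).sum = (l.take j).sum) :
    ∃ T : Multiset (ZMod n), T ≠ 0 ∧ T.sum = 0 ∧ T ≤ (l : Multiset (ZMod n)) ∧
      Multiset.card T ≤ n := by
  refine ⟨((l.take j).drop i : List (ZMod n)), ?_, ?_, ?_, ?_⟩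
  · have hL : ((l.take j).drop i).length = j - i := by
      rw [List.length_drop, List.length_take]; omega
    intro h
    have := congrArg Multiset.card h
    rw [Multiset.coe_card, hL] at this
    simp at this
    omega
  · have hsplit : (l.take j).take i ++ (l.take j).drop i = l.take j :=
      List.take_append_drop i (l.take j)
    have htt : (l.take j).take i = l.take i := by
      rw [List.take_take]; congr 1; omega
    have h2 := congrArg List.sum hsplit
    rw [List.sum_append, htt, hsum] at h2
    simpa using add_eq_left.mp h2
  · exact (((List.drop_sublist i (l.take j))).trans (List.take_sublist j l)).subperm
  · have hL : ((l.take j).drop i).length = j - i := by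
      rw [List.length_drop, List.length_take]; omega
    rw [Multiset.coe_card, hL]; omega

/-- Extract a nonempty zero-sum subsequence of size ≤ n from any multiset of card ≥ n. -/
lemma exists_zs {n : ℕ} (hn : 0 < n) (S : Multiset (ZMod n))
    (hS : n ≤ Multiset.card S) :
    ∃ T : Multiset (ZMod n), T ≠ 0 ∧ T.sum = 0 ∧ T ≤ S ∧ Multiset.card T ≤ n := by
  haveI : NeZero n := ⟨hn.ne'⟩
  set l := S.toList with hl
  have hlS : (l : Multiset (ZMod n)) = S := S.coe_toList
  have hlen : n ≤ l.length := by rw [← hlS] at hS; simpa using hS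
  have hcard : Fintype.card (ZMod n) < Fintype.card (Fin (n+1)) := by simp [ZMod.card]
  obtain ⟨a, b, hab, hfab⟩ :=
    Fintype.exists_ne_map_eq_of_card_lt (fun i : Fin (n+1) => (l.take i).sum) hcard
  have hne : (a : ℕ) ≠ (b : ℕ) := fun h => hab (Fin.ext h)
  rw [← hlS]
  rcases hne.lt_or_gt with hlt | hlt
  · exact block_zs hn l hlen a b hlt (Nat.lt_succ_iff.mp b.isLt) hfab
  · exact block_zs hn l hlen b a hlt (Nat.lt_succ_iff.mp a.isLt) hfab.symm

lemma upper {n : ℕ} (hn : 0 < n) :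
    ∀ r (S : Multiset (ZMod n)), r * n ≤ Multiset.card S → HasDZS r S := by
  intro r
  induction r with
  | zero => intro S _; exact ⟨[], rfl, by simp, by simp⟩
  | succ r ih =>
    intro S hS
    have h1 : n ≤ Multiset.card S := by nlinarith
    obtain ⟨T, hT0, hTsum, hTle, hTcard⟩ := exists_zs hn S h1
    have hrest : r * n ≤ Multiset.card (S - T) := by
      rw [Multiset.card_sub hTle]
      have : (r+1) * n = r * n + n := by ring
      omega
    obtain ⟨L, hLlen, hLmem, hLle⟩ := ih (S - T) hrest
    refine ⟨T :: L, by simp [hLlen], ?_, ?_⟩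
    · intro U hU
      rcases List.mem_cons.mp hU with h | h
      · exact h ▸ ⟨hT0, hTsum⟩
      · exact hLmem U h
    · rw [List.sum_cons]
      calc T + L.sum ≤ T + (S - T) := add_le_add (le_refl T) hLle
        _ = S := add_tsub_cancel_of_le hTle

lemma card_list_sum {α : Type*} (L : List (Multiset α)) :
    Multiset.card L.sum = (L.map Multiset.card).sum := by
  induction L with
  | nil => simp
  | cons a t ih => simp [Multiset.card_add, ih]

/-- For the cyclic group `C_n` and `r ≥ 1`, `D_r(C_n) = r·n`. -/
theorem stmt_1 (n r : ℕ) (hn : 0 < n) (hr : 0 < r) :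
    DavR (ZMod n) r = r * n := by
  haveI : NeZero n := ⟨hn.ne'⟩
  have hmem : r * n ∈ {k | 0 < k ∧ ∀ S : Multiset (ZMod n), k ≤ Multiset.card S → HasDZS r S} :=
    ⟨Nat.mul_pos hr hn, fun S hS => upper hn r S hS⟩
  apply le_antisymm (Nat.sInf_le hmem)
  obtain ⟨hpos, hall⟩ := Nat.sInf_mem (⟨r * n, hmem⟩ :
    Set.Nonempty {k | 0 < k ∧ ∀ S : Multiset (ZMod n), k ≤ Multiset.card S → HasDZS r S})
  by_contra h
  push_neg at h
  set S : Multiset (ZMod n) := Multiset.replicate (r * n - 1) 1 with hSdef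
  have hcardS : Multiset.card S = r * n - 1 := Multiset.card_replicate _ _
  have hd : HasDZS r S := hall S (by omega)
  obtain ⟨L, hLlen, hLmem, hLle⟩ := hd
  have hblock : ∀ T ∈ L, n ≤ Multiset.card T := by
    intro T hT
    obtain ⟨hT0, hTsum⟩ := hLmem T hT
    have hTle : T ≤ S := le_trans (List.le_sum_of_mem hT) hLle
    have hones : ∀ x ∈ T, x = (1 : ZMod n) := fun x hx =>
      Multiset.eq_of_mem_replicate (Multiset.mem_of_le hTle hx)
    have hrep : T = Multiset.replicate (Multiset.card T) (1 : ZMod n) :=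
      (Multiset.eq_replicate_card).mpr hones
    rw [hrep, Multiset.sum_replicate] at hTsum
    have hz : ((Multiset.card T : ℕ) : ZMod n) = 0 := by simpa using hTsum
    have hdvd : n ∣ Multiset.card T := (ZMod.natCast_eq_zero_iff _ _).mp hz
    exact Nat.le_of_dvd (Multiset.card_pos.mpr hT0) hdvd
  have hlb : r * n ≤ (L.map Multiset.card).sum := by
    calc r * n = (L.map (fun _ => n)).sum := by
          rw [List.map_const', List.sum_replicate, hLlen, smul_eq_mul]
      _ ≤ (L.map Multiset.card).sum := List.sum_le_sum hblock
  have hub : Multiset.card L.sum ≤ r * n - 1 := by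
    rw [← hcardS]; exact Multiset.card_le_card hLle
  rw [card_list_sum] at hub
  omega
end

section
/- Let H be a subgroup of a finite abelian group G and let r be a positive integer. Then D_r(G) ≤ D_{D_r(H)}(G/H). -/
section Helpers

open Multiset

/-- split a multiset according to a decomposition of its image -/
lemma split_map_eq_add {α β : Type*} (g : α → β) :
    ∀ (A : Multiset β) (W : Multiset α) (B : Multiset β), W.map g = A + B →
    ∃ A' B' : Multiset α, W = A' + B' ∧ A'.map g = A ∧ B'.map g = B := by
  classical
  intro A
  induction A using Multiset.induction_on with
  | empty => intro W B h; exact ⟨0, W, by simp, by simp, by simpa using h⟩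
  | cons a A ih =>
      intro W B h
      have ha : a ∈ W.map g := by rw [h]; simp
      obtain ⟨w, hw, rfl⟩ := Multiset.mem_map.mp ha
      have h2 : (W.erase w).map g = A + B := by
        rw [Multiset.map_erase_of_mem _ _ hw, h]
        rw [show g w ::ₘ A + B = g w ::ₘ (A + B) by simp [Multiset.cons_add]]
        simp
      obtain ⟨A', B', hW, hA, hB⟩ := ih (W.erase w) B h2
      exact ⟨w ::ₘ A', B', by rw [Multiset.cons_add, ← hW, Multiset.cons_erase hw],
        by simp [hA], hB⟩

/-- single lift along a map -/
lemma lift_le_map_single {α β : Type*} (g : α → β) (M : Multiset β) (S : Multiset α)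
    (h : M ≤ S.map g) : ∃ M' : Multiset α, M' ≤ S ∧ M'.map g = M := by
  obtain ⟨C, hC⟩ := Multiset.le_iff_exists_add.mp h
  obtain ⟨A', B', hW, hA, hB⟩ := split_map_eq_add g M S C hC
  exact ⟨A', by rw [hW]; exact Multiset.le_add_right _ _, hA⟩

/-- lift a list of disjoint multisets along a map -/
lemma lift_le_map {α β : Type*} (g : α → β) :
    ∀ (L : List (Multiset β)) (S : Multiset α), L.sum ≤ S.map g →
    ∃ L' : List (Multiset α), L'.map (Multiset.map g) = L ∧ L'.sum ≤ S := by
  intro L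
  induction L with
  | nil => intro S _; exact ⟨[], rfl, by simp⟩
  | cons T L ih =>
      intro S h
      rw [List.sum_cons] at h
      obtain ⟨W, hWS, hWmap⟩ := lift_le_map_single g (T + L.sum) S h
      obtain ⟨T', V, hW, hT, hV⟩ := split_map_eq_add g T W L.sum hWmap
      obtain ⟨L', hL'map, hL'sum⟩ := ih V (le_of_eq hV.symm)
      refine ⟨T' :: L', by simp [hT, hL'map], ?_⟩
      rw [List.sum_cons]
      calc T' + L'.sum ≤ T' + V := add_le_add (le_refl _) hL'sum
        _ = W := hW.symm
        _ ≤ S := hWS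

/-- A long enough sequence over a finite group has a short nonempty zero-sum subsequence. -/
lemma exists_short_zs {G : Type*} [AddCommGroup G] [Fintype G] (S : Multiset G)
    (h : Fintype.card G ≤ Multiset.card S) :
    ∃ T ≤ S, T ≠ 0 ∧ T.sum = 0 ∧ Multiset.card T ≤ Fintype.card G := by
  classical
  set n := Fintype.card G with hn
  set l := S.toList with hl
  have hlen : n ≤ l.length := by
    rw [hl, Multiset.length_toList]; exact h
  have hcard : Fintype.card G < Fintype.card (Fin (n + 1)) := by simp; omega
  obtain ⟨i, j, hne, hij⟩ := Fintype.exists_ne_map_eq_of_card_lt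
    (fun i : Fin (n + 1) => (l.take i).sum) hcard
  wlog hlt : (i : ℕ) < (j : ℕ) generalizing i j
  · exact this j i hne.symm hij.symm (by
      have : (i:ℕ) ≠ (j:ℕ) := fun hh => hne (Fin.ext hh)
      omega)
  set T : Multiset G := (((l.drop i).take (j - i) : List G) : Multiset G) with hT
  have htake : l.take j = l.take i ++ (l.drop i).take (j - i) := by
    rw [← List.take_add]
    congr 1
    omega
  refine ⟨T, ?_, ?_, ?_, ?_⟩
  · have hsub : ((l.drop i).take (j - i)).Sublist l :=
      ((l.drop i).take_sublist _).trans (l.drop_sublist _)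
    calc T ≤ (l : Multiset G) := hsub.subperm
      _ = S := Multiset.coe_toList S
  · have h1 : (l.drop i).take (j - i) ≠ [] := by
      rw [← List.length_pos_iff, List.length_take, List.length_drop]
      have : (j : ℕ) ≤ n := by omega
      omega
    simpa [hT] using h1
  · have hsum : (l.take j).sum = (l.take i).sum + T.sum := by
      rw [htake, List.sum_append]; rfl
    have := hij
    rw [hsum] at this
    have := add_left_cancel (a := (l.take i).sum)
      (by rw [← this, add_zero] : (l.take ↑i).sum + 0 = (l.take ↑i).sum + T.sum)
    exact this.symm
  · have : Multiset.card T = ((l.drop i).take (j - i)).length := rfl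
    rw [this, List.length_take]
    have : (j : ℕ) ≤ n := by omega
    omega

/-- any long enough sequence over a finite abelian group has `r` disjoint zero-sums -/
lemma hasDZS_of_big {G : Type*} [AddCommGroup G] [Fintype G] :
    ∀ (r : ℕ) (S : Multiset G), r * Fintype.card G ≤ Multiset.card S → HasDZS r S := by
  classical
  intro r
  induction r with
  | zero => intro S _; exact ⟨[], rfl, by simp, by simp⟩
  | succ r ih =>
      intro S h
      have h1 : Fintype.card G ≤ Multiset.card S := by
        refine le_trans ?_ h
        have h2 : 1 * Fintype.card G ≤ (r + 1) * Fintype.card G :=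
          Nat.mul_le_mul_right _ (by omega)
        simpa using h2
      obtain ⟨T, hTS, hT0, hTsum, hTcard⟩ := exists_short_zs S h1
      have h2 : r * Fintype.card G ≤ Multiset.card (S - T) := by
        rw [Multiset.card_sub hTS]
        have : (r + 1) * Fintype.card G = r * Fintype.card G + Fintype.card G := by ring
        omega
      obtain ⟨L, hlen, hprop, hsum⟩ := ih (S - T) h2
      refine ⟨T :: L, by simp [hlen], ?_, ?_⟩
      · intro U hU
        rcases List.mem_cons.mp hU with rfl | hU
        · exact ⟨hT0, hTsum⟩
        · exact hprop U hU
      · rw [List.sum_cons]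
        calc T + L.sum ≤ T + (S - T) := add_le_add (le_refl _) hsum
          _ = S := add_tsub_cancel_of_le hTS

/-- the defining set of `DavR` is nonempty for finite groups and the infimum is a member -/
lemma davR_mem {G : Type*} [AddCommGroup G] [Fintype G] (r : ℕ) (hr : 0 < r) :
    DavR G r ∈ {k | 0 < k ∧ ∀ S : Multiset G, k ≤ Multiset.card S → HasDZS r S} := by
  apply Nat.sInf_mem
  refine ⟨r * Fintype.card G, ?_, ?_⟩
  · exact Nat.mul_pos hr Fintype.card_pos
  · intro S hS
    exact hasDZS_of_big r S hS

/-- membership of an element of a list in terms of `≤` of sum, for multisets -/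
lemma le_list_sum_of_mem {γ : Type*} : ∀ {l : List (Multiset γ)} {a : Multiset γ},
    a ∈ l → a ≤ l.sum := by
  intro l
  induction l with
  | nil => intro a ha; simp at ha
  | cons b l ih =>
      intro a ha
      rw [List.sum_cons]
      rcases List.mem_cons.mp ha with rfl | ha
      · exact Multiset.le_add_right _ _
      · exact le_trans (ih ha) (Multiset.le_add_left _ _)

lemma le_multiset_sum_of_mem {γ : Type*} {s : Multiset (Multiset γ)} {a : Multiset γ}
    (ha : a ∈ s) : a ≤ s.sum := by
  obtain ⟨t, rfl⟩ := Multiset.exists_cons_of_mem ha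
  rw [Multiset.sum_cons]
  exact Multiset.le_add_right _ _

lemma multiset_sum_mono {γ : Type*} {s t : Multiset (Multiset γ)} (h : s ≤ t) :
    s.sum ≤ t.sum := by
  obtain ⟨u, rfl⟩ := Multiset.le_iff_exists_add.mp h
  rw [Multiset.sum_add]
  exact Multiset.le_add_right _ _

lemma list_sum_map_sum {γ : Type*} : ∀ (l : List (Multiset (Multiset γ))),
    (l.map Multiset.sum).sum = l.sum.sum := by
  intro l
  induction l with
  | nil => simp
  | cons a l ih => simp [Multiset.sum_add, ih]

lemma multiset_sum_sum {γ : Type*} [AddCommMonoid γ] (s : Multiset (Multiset γ)) :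
    s.sum.sum = (s.map Multiset.sum).sum := by
  induction s using Multiset.induction_on with
  | empty => simp
  | cons a s ih => simp [Multiset.sum_add, ih]

end Helpers

/-- If `H` is a subgroup of a finite abelian group `G` and `r ≥ 1`, then
`D_r(G) ≤ D_{D_r(H)}(G/H)`. -/
theorem stmt_3 (G : Type*) [AddCommGroup G] [Fintype G] (H : AddSubgroup G)
    (r : ℕ) (hr : 0 < r) :
    DavR G r ≤ DavR (G ⧸ H) (DavR H r) := by
  classical
  haveI : Fintype H := Fintype.ofFinite H
  haveI : Fintype (G ⧸ H) := Fintype.ofFinite (G ⧸ H)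
  set s := DavR H r with hs
  obtain ⟨hspos, hsprop⟩ := davR_mem (G := H) r hr
  obtain ⟨hnpos, hnprop⟩ := davR_mem (G := G ⧸ H) s hspos
  set n := DavR (G ⧸ H) s with hn
  apply Nat.sInf_le
  refine ⟨hnpos, ?_⟩
  intro S hS
  set π : G →+ G ⧸ H := QuotientAddGroup.mk' H with hπ
  -- project to the quotient and find s disjoint zero-sums there
  have hcard : n ≤ Multiset.card (S.map π) := by rwa [Multiset.card_map]
  obtain ⟨L, hLlen, hLprop, hLsum⟩ := hnprop (S.map π) hcard
  -- lift to G
  obtain ⟨L', hL'map, hL'sum⟩ := lift_le_map π L S hLsum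
  have hL'mem : ∀ T' ∈ L', T' ≠ 0 ∧ T'.sum ∈ H := by
    intro T' hT'
    have hmem : T'.map π ∈ L := by
      rw [← hL'map]; exact List.mem_map_of_mem hT'
    obtain ⟨hne, hzero⟩ := hLprop _ hmem
    constructor
    · rintro rfl; simp at hne
    · have : π T'.sum = (T'.map π).sum := map_multiset_sum π T'
      rw [hzero] at this
      exact (QuotientAddGroup.eq_zero_iff _).mp this
  -- the sums of the lifts, as elements of H
  set f : Multiset G → H := fun T' => if h : T'.sum ∈ H then (⟨T'.sum, h⟩ : H) else 0 with hf
  have hσcard : s ≤ Multiset.card ((L' : Multiset (Multiset G)).map f) := by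
    rw [Multiset.card_map, Multiset.coe_card]
    have := congrArg List.length hL'map
    rw [List.length_map] at this
    omega
  obtain ⟨K, hKlen, hKprop, hKsum⟩ := hsprop _ hσcard
  -- lift the zero-sum structure on H back to collections of multisets over G
  obtain ⟨K', hK'map, hK'sum⟩ := lift_le_map f K (L' : Multiset (Multiset G)) hKsum
  refine ⟨K'.map Multiset.sum, ?_, ?_, ?_⟩
  · rw [List.length_map]
    have := congrArg List.length hK'map
    rw [List.length_map] at this
    omega
  · intro U hU
    obtain ⟨W', hW'K, rfl⟩ := List.mem_map.mp hU
    have hWK : W'.map f ∈ K := by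
      rw [← hK'map]; exact List.mem_map_of_mem hW'K
    obtain ⟨hWne, hWzero⟩ := hKprop _ hWK
    have hmemL' : ∀ T' ∈ W', T' ∈ L' := by
      intro T' hT'
      have h1 : T' ∈ K'.sum := Multiset.mem_of_le (le_list_sum_of_mem hW'K) hT'
      have h2 : T' ∈ (L' : Multiset (Multiset G)) := Multiset.mem_of_le hK'sum h1
      exact Multiset.mem_coe.mp h2
    constructor
    · -- nonempty
      have hW'ne : W' ≠ 0 := by rintro rfl; simp at hWne
      obtain ⟨T', hT'⟩ := Multiset.exists_mem_of_ne_zero hW'ne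
      have hT'ne : T' ≠ 0 := (hL'mem T' (hmemL' T' hT')).1
      have hle : T' ≤ W'.sum := le_multiset_sum_of_mem hT'
      intro hzero
      rw [hzero] at hle
      exact hT'ne (Multiset.le_zero.mp hle)
    · -- zero-sum
      have key : W'.map Multiset.sum = (W'.map f).map (fun h : H => (h : G)) := by
        rw [Multiset.map_map]
        apply Multiset.map_congr rfl
        intro T' hT'
        have hmem := (hL'mem T' (hmemL' T' hT')).2
        simp [hf, hmem]
      calc W'.sum.sum = (W'.map Multiset.sum).sum := multiset_sum_sum W'
        _ = ((W'.map f).map (fun h : H => (h : G))).sum := by rw [key]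
        _ = ((W'.map f).sum : H) := (map_multiset_sum H.subtype (W'.map f)).symm
        _ = ((0 : H) : G) := by rw [hWzero]
        _ = 0 := rfl
  · calc (K'.map Multiset.sum).sum = K'.sum.sum := list_sum_map_sum K'
      _ ≤ (L' : Multiset (Multiset G)).sum := multiset_sum_mono hK'sum
      _ = L'.sum := by rw [Multiset.sum_coe]
      _ ≤ S := hL'sum
end

section
/- Let G be a finite abelian group and r ≥ 1 an integer. If η(G) ≤ D(G) + exp(G), then η_r(G) ≤ D(G) + r·exp(G). -/
/-- `S` contains `r` pairwise disjoint short (length at most `exp G`) nonempty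
zero-sum subsequences. -/
def HasShortDZS {G : Type*} [AddCommGroup G] (r : ℕ) (S : Multiset G) : Prop :=
  ∃ L : List (Multiset G), L.length = r ∧
    (∀ T ∈ L, T ≠ 0 ∧ T.sum = 0 ∧ Multiset.card T ≤ AddMonoid.exponent G) ∧ L.sum ≤ S

/-- The generalized eta-invariant `η_r(G)`. -/
noncomputable def EtaR (G : Type*) [AddCommGroup G] (r : ℕ) : ℕ :=
  sInf {k | 0 < k ∧ ∀ S : Multiset G, k ≤ Multiset.card S → HasShortDZS r S}

lemma exists_short_aux {G : Type*} [AddCommGroup G] [Fintype G]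
    (S : Multiset G)
    (hS : (AddMonoid.exponent G - 1) * Fintype.card G + 1 ≤ Multiset.card S) :
    HasShortDZS 1 S := by
  classical
  set e := AddMonoid.exponent G with he
  have hepos : 0 < e := AddMonoid.ExponentExists.exponent_pos (by
    exact AddMonoid.ExponentExists.of_finite)
  -- find an element with count ≥ e
  have hcard : Multiset.card S = ∑ a ∈ S.toFinset, S.count a :=
    (Multiset.toFinset_sum_count_eq S).symm
  by_contra hcon
  have hall : ∃ g, e ≤ S.count g := by
    by_contra hno
    push_neg at hno
    have hbound : Multiset.card S ≤ (e - 1) * Fintype.card G := by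
      rw [hcard]
      calc ∑ a ∈ S.toFinset, S.count a ≤ ∑ a ∈ S.toFinset, (e - 1) :=
            Finset.sum_le_sum (fun a _ => Nat.le_sub_one_of_lt (hno a))
        _ = S.toFinset.card * (e - 1) := by rw [Finset.sum_const, smul_eq_mul]
        _ ≤ Fintype.card G * (e - 1) :=
            Nat.mul_le_mul_right _ (Finset.card_le_card (Finset.subset_univ _))
        _ = (e - 1) * Fintype.card G := Nat.mul_comm _ _
    omega
  obtain ⟨g, hg⟩ := hall
  apply hcon
  refine ⟨[Multiset.replicate e g], rfl, ?_, ?_⟩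
  · intro T hT
    simp only [List.mem_singleton] at hT
    subst hT
    refine ⟨?_, ?_, ?_⟩
    · intro hcon0
      have := congrArg Multiset.card hcon0
      simp at this
      omega
    · rw [Multiset.sum_replicate]
      exact AddMonoid.exponent_nsmul_eq_zero g
    · simp [he]
  · simpa using Multiset.le_count_iff_replicate_le.mp hg

/-- If `η(G) ≤ D(G) + exp(G)`, then `η_r(G) ≤ D(G) + r·exp(G)` for all `r ≥ 1`. -/
theorem stmt_5 (G : Type*) [AddCommGroup G] [Fintype G] (r : ℕ) (hr : 1 ≤ r)
    (h : EtaR G 1 ≤ DavR G 1 + AddMonoid.exponent G) :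
    EtaR G r ≤ DavR G 1 + r * AddMonoid.exponent G := by
  classical
  set e := AddMonoid.exponent G with he
  set D := DavR G 1 with hD
  have hepos : 0 < e := AddMonoid.ExponentExists.exponent_pos AddMonoid.ExponentExists.of_finite
  -- the set defining EtaR G 1 is nonempty
  have hmem : EtaR G 1 ∈ {k | 0 < k ∧ ∀ S : Multiset G, k ≤ Multiset.card S → HasShortDZS 1 S} :=
    Nat.sInf_mem ⟨(e - 1) * Fintype.card G + 1, Nat.succ_pos _,
      fun S hS => exists_short_aux S hS⟩
  obtain ⟨he1pos, h1⟩ := hmem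
  -- main claim by induction
  have key : ∀ n, ∀ S : Multiset G, D + (n + 1) * e ≤ Multiset.card S → HasShortDZS (n + 1) S := by
    intro n
    induction n with
    | zero =>
      intro S hS
      exact h1 S (le_trans h (by simpa using hS))
    | succ n ih =>
      intro S hS
      have hS1 : EtaR G 1 ≤ Multiset.card S := by
        refine le_trans h (le_trans ?_ hS)
        have : e ≤ (n + 1 + 1) * e := Nat.le_mul_of_pos_left e (Nat.succ_pos _)
        omega
      obtain ⟨L1, hlen1, hprop1, hle1⟩ := h1 S hS1
      obtain ⟨T, rfl⟩ : ∃ T, L1 = [T] := List.length_eq_one_iff.mp hlen1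
      have hTle : T ≤ S := by simpa using hle1
      obtain ⟨hTne, hTsum, hTcard⟩ := hprop1 T (List.mem_singleton_self T)
      have hcardsub : Multiset.card (S - T) = Multiset.card S - Multiset.card T :=
        Multiset.card_sub hTle
      have hrec : D + (n + 1) * e ≤ Multiset.card (S - T) := by
        rw [hcardsub]
        have h2 : (n + 1 + 1) * e = (n + 1) * e + e := by ring
        omega
      obtain ⟨L, hlen, hprop, hle⟩ := ih (S - T) hrec
      refine ⟨T :: L, by simp [hlen], ?_, ?_⟩
      · intro U hU
        rcases List.mem_cons.mp hU with h' | h'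
        · subst h'; exact ⟨hTne, hTsum, hTcard⟩
        · exact hprop U h'
      · simp only [List.sum_cons]
        exact (le_tsub_iff_left hTle).mp hle
  -- conclude
  obtain ⟨n, rfl⟩ : ∃ n, r = n + 1 := ⟨r - 1, by omega⟩
  refine Nat.sInf_le ⟨?_, key n⟩
  have : 0 < (n + 1) * e := Nat.mul_pos (Nat.succ_pos _) hepos
  omega
end

section
/- Let p be a prime, q, d ∈ ℕ with gcd(p,q) = 1, and G = C_p^d × C_q. Let m = p(q+d−1) − (d−1) and let S = (x_1,y_1)...(x_m,y_m) be a sequence over G in which at most pq of the y-coordinates are nonzero. Then S has a nonempty zero-sum subsequence. -/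
open Multiset MvPolynomial

lemma aux_sum_pair {α β : Type*} [AddCommMonoid α] [AddCommMonoid β] (T : Multiset (α × β)) :
    T.sum = ((T.map Prod.fst).sum, (T.map Prod.snd).sum) := by
  induction T using Multiset.induction with
  | empty => simp; rfl
  | cons a s ih => simp [ih, Prod.ext_iff]

lemma aux_seg {q : ℕ} (hq : 0 < q) {α : Type*} (f : α → ZMod q) (M : Multiset α)
    (hM : q ≤ Multiset.card M) :
    ∃ T ≤ M, T ≠ 0 ∧ Multiset.card T ≤ q ∧ (T.map f).sum = 0 := by
  haveI : NeZero q := ⟨hq.ne'⟩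
  set l := M.toList with hl
  have hlen : l.length = Multiset.card M := M.length_toList
  have key : ∀ i j : Fin (q + 1), (i : ℕ) < (j : ℕ) →
      ((l.take i).map f).sum = ((l.take j).map f).sum →
      ∃ T ≤ M, T ≠ 0 ∧ Multiset.card T ≤ q ∧ (T.map f).sum = 0 := by
    intro i j hij heq
    have hjq : (j : ℕ) ≤ q := by omega
    have hjl : (j : ℕ) ≤ l.length := by omega
    have hlen2 : (List.take ((j : ℕ) - i) (List.drop i l)).length = (j : ℕ) - i := by
      rw [List.length_take, List.length_drop]; omega
    refine ⟨(((l.drop i).take (j - i) : List α) : Multiset α), ?_, ?_, ?_, ?_⟩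
    · rw [← Multiset.coe_toList M]
      exact Multiset.coe_le.mpr
        (((List.take_sublist _ _).trans (List.drop_sublist _ _)).subperm)
    · rw [ne_eq, Multiset.coe_eq_zero, ← List.length_eq_zero_iff]
      omega
    · rw [Multiset.coe_card]; omega
    · have hsplit : l.take j = l.take i ++ (l.drop i).take ((j : ℕ) - i) := by
        rw [← List.take_add]
        congr 1
        omega
      rw [hsplit, List.map_append, List.sum_append] at heq
      simpa using left_eq_add.mp heq
  obtain ⟨i, j, hne, heq⟩ := Fintype.exists_ne_map_eq_of_card_lt
    (fun i : Fin (q + 1) => ((l.take i).map f).sum)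
    (by simp [ZMod.card])
  rcases lt_or_gt_of_ne (fun h : (i : ℕ) = (j : ℕ) => hne (Fin.ext h)) with h | h
  · exact key i j h heq
  · exact key j i h heq.symm


lemma aux_olson {p : ℕ} (hp : p.Prime) {d : ℕ} {α : Type*} (f : α → (Fin d → ZMod p))
    (M : Multiset α) (hM : d * (p - 1) + 1 ≤ Multiset.card M) :
    ∃ T ≤ M, T ≠ 0 ∧ (T.map f).sum = 0 := by
  haveI := Fact.mk hp
  set l := M.toList with hl
  set n := l.length with hn
  have hlen : n = Multiset.card M := M.length_toList
  set F : Fin d → MvPolynomial (Fin n) (ZMod p) :=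
    fun j => ∑ i : Fin n, MvPolynomial.C (f (l.get i) j) * MvPolynomial.X i ^ (p - 1) with hF
  have hdeg : (∑ j : Fin d, (F j).totalDegree) < Fintype.card (Fin n) := by
    have h1 : ∀ j, (F j).totalDegree ≤ p - 1 := by
      intro j
      refine (MvPolynomial.totalDegree_finset_sum _ _).trans ?_
      apply Finset.sup_le
      intro i _
      refine (MvPolynomial.totalDegree_mul _ _).trans ?_
      simp [MvPolynomial.totalDegree_X_pow]
    calc ∑ j : Fin d, (F j).totalDegree ≤ ∑ _j : Fin d, (p - 1) :=
          Finset.sum_le_sum fun j _ => h1 j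
      _ = d * (p - 1) := by simp [mul_comm]
      _ < Fintype.card (Fin n) := by simp only [Fintype.card_fin]; omega
  have hdvd := char_dvd_card_solutions_of_fintype_sum_lt p hdeg
  have h0 : ∀ j, eval (0 : Fin n → ZMod p) (F j) = 0 := by
    intro j
    simp [hF, zero_pow (Nat.sub_ne_zero_of_lt hp.one_lt)]
  have hpos : 0 < Fintype.card { x : Fin n → ZMod p // ∀ j, eval x (F j) = 0 } :=
    Fintype.card_pos_iff.mpr ⟨⟨0, h0⟩⟩
  have hbig : 1 < Fintype.card { x : Fin n → ZMod p // ∀ j, eval x (F j) = 0 } :=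
    lt_of_lt_of_le hp.one_lt (Nat.le_of_dvd hpos (by convert hdvd using 2))
  obtain ⟨y, hy⟩ := Fintype.exists_ne_of_one_lt_card hbig ⟨0, h0⟩
  have hx0 : y.1 ≠ 0 := fun h => hy (Subtype.ext h)
  set x := y.1 with hxdef
  have hxsol : ∀ j, eval x (F j) = 0 := y.2
  classical
  set s : Finset (Fin n) := Finset.univ.filter (fun i => x i ≠ 0) with hs
  refine ⟨Multiset.map l.get s.val, ?_, ?_, ?_⟩
  · have h1 : s.val ≤ (Finset.univ : Finset (Fin n)).val := by
      exact Finset.val_le_iff.mpr (Finset.subset_univ s)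
    have h2 := Multiset.map_le_map (f := l.get) h1
    have h3 : Multiset.map l.get (Finset.univ : Finset (Fin n)).val = M := by
      rw [Fin.univ_def]
      show Multiset.map l.get (↑(List.finRange n)) = M
      rw [Multiset.map_coe, List.map_get_finRange, hl, Multiset.coe_toList]
    rwa [h3] at h2
  · obtain ⟨i, hi⟩ := Function.ne_iff.mp hx0
    have hi' : x i ≠ 0 := by simpa using hi
    have hmem : i ∈ s := by simp [hs, hi']
    rw [ne_eq, Multiset.map_eq_zero]
    intro h
    have := Finset.mem_def.mp hmem
    rw [h] at this
    exact Multiset.notMem_zero i this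
  · have hsum : (Multiset.map f (Multiset.map l.get s.val)).sum = ∑ i ∈ s, f (l.get i) := by
      rw [Multiset.map_map]; rfl
    rw [hsum]
    funext j
    rw [Finset.sum_apply]
    have heval : eval x (F j) = ∑ i : Fin n, f (l.get i) j * x i ^ (p - 1) := by
      simp [hF]
    have hsplit : ∑ i : Fin n, f (l.get i) j * x i ^ (p - 1) = ∑ i ∈ s, f (l.get i) j := by
      rw [← Finset.sum_filter_add_sum_filter_not Finset.univ (fun i => x i ≠ 0)
        (fun i => f (l.get i) j * x i ^ (p - 1))]
      have h1 : ∑ i ∈ Finset.univ.filter (fun i => x i ≠ 0), f (l.get i) j * x i ^ (p - 1)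
          = ∑ i ∈ s, f (l.get i) j := by
        refine Finset.sum_congr (by rw [hs]) fun i hi => ?_
        have : x i ≠ 0 := by simpa [hs] using (Finset.mem_filter.mp hi).2
        rw [ZMod.pow_card_sub_one_eq_one this, mul_one]
      have h2 : ∑ i ∈ Finset.univ.filter (fun i => ¬ x i ≠ 0), f (l.get i) j * x i ^ (p - 1)
          = 0 := by
        refine Finset.sum_eq_zero fun i hi => ?_
        have : x i = 0 := by simpa using (Finset.mem_filter.mp hi).2
        rw [this, zero_pow (Nat.sub_ne_zero_of_lt hp.one_lt), mul_zero]
      rw [h2, add_zero]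
      exact h1
    have := hxsol j
    rw [heval, hsplit] at this
    simpa using this


/-- Greedy extraction of blocks with zero `f`-sum. -/
lemma aux_extract {q : ℕ} (hq : 0 < q) {α : Type*} (f : α → ZMod q) :
    ∀ (n : ℕ) (M : Multiset α), Multiset.card M ≤ n →
      ∃ B : Multiset (Multiset α), B.join ≤ M ∧
        (∀ b ∈ B, b ≠ 0 ∧ (b.map f).sum = 0) ∧
        Multiset.card M ≤ Multiset.card B * q + (q - 1) := by
  haveI := Classical.decEq α
  intro n
  induction n with
  | zero =>
    intro M hM
    exact ⟨0, by simp, by simp, by omega⟩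
  | succ n ih =>
    intro M hM
    by_cases hlt : Multiset.card M < q
    · exact ⟨0, by simp, by simp, by omega⟩
    · push_neg at hlt
      obtain ⟨T, hTM, hT0, hTcard, hTsum⟩ := aux_seg hq f M hlt
      have hT1 : 1 ≤ Multiset.card T := by
        exact Multiset.card_pos.mpr hT0
      have hsub : Multiset.card (M - T) ≤ n := by
        rw [Multiset.card_sub hTM]; omega
      obtain ⟨B', hB'join, hB'prop, hB'card⟩ := ih (M - T) hsub
      refine ⟨T ::ₘ B', ?_, ?_, ?_⟩
      · rw [Multiset.join_cons]
        calc T + B'.join ≤ T + (M - T) := by gcongr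
          _ = M := add_tsub_cancel_of_le hTM
      · intro b hb
        rcases Multiset.mem_cons.mp hb with rfl | hb
        · exact ⟨hT0, hTsum⟩
        · exact hB'prop b hb
      · rw [Multiset.card_cons, add_one_mul]
        have := Multiset.card_sub hTM
        omega

lemma aux_join_singleton {α : Type*} (S : Multiset α) :
    (S.map fun a => ({a} : Multiset α)).join = S := by
  induction S using Multiset.induction with
  | empty => simp
  | cons a s ih => simp [ih]

lemma aux_join_mono {α : Type*} {C B : Multiset (Multiset α)} (h : C ≤ B) :
    C.join ≤ B.join := by
  obtain ⟨D, rfl⟩ := Multiset.le_iff_exists_add.mp h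
  rw [Multiset.join_add]
  exact Multiset.le_add_right _ _

lemma aux_arith (p q d c₁ c₂ t : ℕ) (hp : 2 ≤ p) (hq : 1 ≤ q) (hd : 1 ≤ d)
    (h1 : c₁ + c₂ + (d - 1) = p * (q + d - 1)) (h2 : c₂ ≤ p * q)
    (h3 : c₂ ≤ t * q + (q - 1)) :
    d * (p - 1) + 1 ≤ c₁ + t := by
  obtain ⟨d, rfl⟩ : ∃ e, d = e + 1 := ⟨d - 1, by omega⟩
  obtain ⟨q, rfl⟩ : ∃ e, q = e + 1 := ⟨q - 1, by omega⟩
  obtain ⟨p, rfl⟩ : ∃ e, p = e + 2 := ⟨p - 2, by omega⟩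
  have e1 : q + 1 + (d + 1) - 1 = q + d + 1 := by omega
  have e2 : d + 1 - 1 = d := by omega
  have e3 : q + 1 - 1 = q := by omega
  have e4 : p + 2 - 1 = p + 1 := by omega
  rw [e1, e2] at h1
  rw [e3] at h3
  rw [e4]
  zify at h1 h2 h3 ⊢
  nlinarith [h1, h2, h3, mul_nonneg (by positivity : (0:ℤ) ≤ (q:ℤ))
      (by linarith : (0:ℤ) ≤ (p+2)*(q+1) - c₂)]


/-- Let `p` be a prime, `gcd(p,q) = 1`, `G = C_p^d × C_q`, and
`m = p(q+d-1) - (d-1)`. Every sequence over `G` of length `m` in which at most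
`pq` of the `y`-coordinates are nonzero has a nonempty zero-sum subsequence. -/
theorem stmt_10 (p q d : ℕ) (hp : p.Prime) (hq : 0 < q) (hd : 0 < d)
    (hco : Nat.Coprime p q)
    (S : Multiset ((Fin d → ZMod p) × ZMod q))
    (hcard : Multiset.card S = p * (q + d - 1) - (d - 1))
    (hfew : Multiset.card (S.filter fun a => a.2 ≠ 0) ≤ p * q) :
    ∃ T, T ≤ S ∧ T ≠ 0 ∧ T.sum = 0 := by
  classical
  set S₂ := S.filter (fun a => a.2 ≠ 0) with hS2
  set S₁ := S.filter (fun a => ¬ a.2 ≠ 0) with hS1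
  have hsplit : S₂ + S₁ = S := Multiset.filter_add_not _ S
  set B₁ := S₁.map (fun a => ({a} : Multiset ((Fin d → ZMod p) × ZMod q))) with hB1
  have hB₁join : B₁.join = S₁ := aux_join_singleton S₁
  have hB₁prop : ∀ b ∈ B₁, b ≠ 0 ∧ (b.map Prod.snd).sum = 0 := by
    intro b hb
    obtain ⟨a, ha, rfl⟩ := Multiset.mem_map.mp hb
    have h2 : ¬ a.2 ≠ 0 := by
      rw [hS1] at ha
      exact (Multiset.mem_filter.mp ha).2
    exact ⟨by simp, by simp [not_not.mp h2]⟩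
  obtain ⟨B₂, hB₂join, hB₂prop, hB₂card⟩ :=
    aux_extract hq Prod.snd (Multiset.card S₂) S₂ le_rfl
  set B := B₁ + B₂ with hB
  have hBjoin : B.join ≤ S := by
    rw [hB, Multiset.join_add, hB₁join]
    calc S₁ + B₂.join ≤ S₁ + S₂ := by gcongr
      _ = S := by rw [add_comm]; exact hsplit
  have hBprop : ∀ b ∈ B, b ≠ 0 ∧ (b.map Prod.snd).sum = 0 := by
    intro b hb
    rcases Multiset.mem_add.mp hb with h | h
    exacts [hB₁prop b h, hB₂prop b h]
  have hc : Multiset.card S₁ + Multiset.card S₂ = Multiset.card S := by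
    rw [← hsplit, Multiset.card_add]; omega
  have hm : Multiset.card S + (d - 1) = p * (q + d - 1) := by
    have h1 : d - 1 ≤ p * (q + d - 1) :=
      le_trans (by omega) (Nat.le_mul_of_pos_left _ hp.pos)
    omega
  have hBcard : d * (p - 1) + 1 ≤ Multiset.card B := by
    have hc1 : Multiset.card B = Multiset.card S₁ + Multiset.card B₂ := by
      rw [hB, Multiset.card_add, hB1, Multiset.card_map]
    rw [hc1]
    exact aux_arith p q d (Multiset.card S₁) (Multiset.card S₂) (Multiset.card B₂)
      hp.two_le hq hd (by omega) hfew hB₂card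
  obtain ⟨C, hCB, hC0, hCsum⟩ :=
    aux_olson hp (fun b : Multiset ((Fin d → ZMod p) × ZMod q) => (b.map Prod.fst).sum) B hBcard
  refine ⟨C.join, le_trans (aux_join_mono hCB) hBjoin, ?_, ?_⟩
  · obtain ⟨b, hb⟩ := Multiset.exists_mem_of_ne_zero hC0
    obtain ⟨C', rfl⟩ := Multiset.exists_cons_of_mem hb
    rw [Multiset.join_cons]
    intro h
    have hb0 := (hBprop b (Multiset.mem_of_le hCB (Multiset.mem_cons_self b C'))).1
    have hcc : Multiset.card (b + C'.join) = 0 := by rw [h]; simp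
    rw [Multiset.card_add] at hcc
    exact hb0 (Multiset.card_eq_zero.mp (by omega))
  · rw [Multiset.sum_join, aux_sum_pair (C.map Multiset.sum)]
    have hfst : ((C.map Multiset.sum).map Prod.fst).sum = 0 := by
      rw [Multiset.map_map]
      have : C.map (Prod.fst ∘ Multiset.sum)
          = C.map (fun b => (b.map Prod.fst).sum) :=
        Multiset.map_congr rfl fun b _ => by
          simp [Function.comp, aux_sum_pair b]
      rw [this]
      exact hCsum
    have hsnd : ((C.map Multiset.sum).map Prod.snd).sum = 0 := by
      rw [Multiset.map_map]
      refine Multiset.sum_eq_zero ?_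
      intro z hz
      obtain ⟨b, hbC, rfl⟩ := Multiset.mem_map.mp hz
      have := (hBprop b (Multiset.mem_of_le hCB hbC)).2
      simp [Function.comp, aux_sum_pair b, this]
    rw [hfst, hsnd]
    rfl
end

section
/- Let p be a prime and e_1 ≤ e_2 ≤ ... ≤ e_d positive integers with p^{e_d} ≥ 1 + Σ_{i=1}^{d−1}(p^{e_i} − 1). Then for G = C_{p^{e_1}} × ... × C_{p^{e_d}}, we have η(G) ≤ D(G) + exp(G) = 2p^{e_d} + Σ_{i=1}^{d−1} p^{e_i} − d. -/
set_option linter.unusedSectionVars false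

open Multiset Finset AddMonoidAlgebra


lemma msum_apply {ι : Type*} {β : ι → Type*} [∀ i, AddCommMonoid (β i)]
    (T : Multiset (∀ i, β i)) (i : ι) : T.sum i = (T.map (fun g => g i)).sum := by
  induction T using Multiset.induction_on with
  | empty => simp
  | cons a s ih => simp [ih]

lemma exists_le_map {α β : Type*} [DecidableEq β] {f : α → β} :
    ∀ {S : Multiset α} {T : Multiset β}, T ≤ S.map f → ∃ T₀ ≤ S, T₀.map f = T := by
  intro S
  induction S using Multiset.induction_on with
  | empty => intro T h; simp only [Multiset.map_zero, Multiset.le_zero] at h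
             exact ⟨0, le_refl _, by simp [h]⟩
  | cons a s ih =>
    intro T h
    rw [Multiset.map_cons] at h
    by_cases hm : f a ∈ T
    · have h2 : T.erase (f a) ≤ Multiset.map f s := by
        have := Multiset.erase_le_erase (f a) h
        rwa [Multiset.erase_cons_head] at this
      obtain ⟨T₀, hT₀, hmap⟩ := ih h2
      exact ⟨a ::ₘ T₀, Multiset.cons_le_cons _ hT₀, by
        rw [Multiset.map_cons, hmap, Multiset.cons_erase hm]⟩
    · rw [Multiset.le_cons_of_notMem hm] at h
      obtain ⟨T₀, hT₀, hmap⟩ := ih h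
      exact ⟨T₀, le_trans hT₀ (Multiset.le_cons_self _ _), hmap⟩

abbrev PG (p : ℕ) {ι : Type*} (f : ι → ℕ) : Type _ := ∀ i, ZMod (p ^ f i)

section olson
variable (p : ℕ) {ι : Type*} [Fintype ι] [DecidableEq ι] (f : ι → ℕ)



lemma uadd (a b : PG p f) : (single (a + b) (1:ZMod p) - 1 : AddMonoidAlgebra (ZMod p) (PG p f))
    = (single a 1 - 1) * (single b 1 - 1) + (single a 1 - 1) + (single b 1 - 1) := by
  have h : (single a (1:ZMod p) : AddMonoidAlgebra (ZMod p) (PG p f)) * single b 1 = single (a + b) 1 := by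
    rw [AddMonoidAlgebra.single_mul_single, one_mul]
  rw [← h]; ring

lemma umem (hp : 0 < p) (a : PG p f) :
    (single a (1:ZMod p) - 1 : AddMonoidAlgebra (ZMod p) (PG p f)) ∈
      Ideal.span (Set.range fun j => (single (Pi.single j 1) (1:ZMod p) - 1 : AddMonoidAlgebra (ZMod p) (PG p f))) := by
  set I := Ideal.span (Set.range fun j => (single (Pi.single j 1) (1:ZMod p) - 1 : AddMonoidAlgebra (ZMod p) (PG p f))) with hI
  have hzero : (single (0:PG p f) (1:ZMod p) - 1 : AddMonoidAlgebra (ZMod p) (PG p f)) ∈ I := by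
    rw [← AddMonoidAlgebra.one_def, sub_self]; exact zero_mem I
  have hadd : ∀ a b : PG p f, (single a (1:ZMod p) - 1 : AddMonoidAlgebra (ZMod p) (PG p f)) ∈ I →
      (single b (1:ZMod p) - 1 : AddMonoidAlgebra (ZMod p) (PG p f)) ∈ I → (single (a+b) (1:ZMod p) - 1 : AddMonoidAlgebra (ZMod p) (PG p f)) ∈ I := by
    intro a b ha hb
    rw [uadd]
    exact add_mem (add_mem (Ideal.mul_mem_right _ _ ha) ha) hb
  have hsmul : ∀ (m : ℕ) (a : PG p f), (single a (1:ZMod p) - 1 : AddMonoidAlgebra (ZMod p) (PG p f)) ∈ I →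
      (single (m • a) (1:ZMod p) - 1 : AddMonoidAlgebra (ZMod p) (PG p f)) ∈ I := by
    intro m a ha
    induction m with
    | zero => simpa using hzero
    | succ k ih => rw [succ_nsmul]; exact hadd _ _ ih ha
  have hsingle : ∀ (j : ι) (c : ZMod (p ^ f j)),
      (single (Pi.single j c : PG p f) (1:ZMod p) - 1 : AddMonoidAlgebra (ZMod p) (PG p f)) ∈ I := by
    intro j c
    have hc : (Pi.single j c : PG p f) = c.val • Pi.single j 1 := by
      ext i
      by_cases hij : i = j
      · subst hij
        simp only [Pi.single_eq_same, Pi.smul_apply, nsmul_eq_mul, mul_one]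
        haveI : NeZero (p ^ f i) := ⟨(pow_pos hp _).ne'⟩
        exact (ZMod.natCast_rightInverse c).symm
      · simp [Pi.single_eq_of_ne hij]
    rw [hc]
    exact hsmul _ _ (Ideal.subset_span ⟨j, rfl⟩)
  have key : ∀ (s : Finset ι) (w : ι → PG p f),
      (∀ j ∈ s, (single (w j) (1:ZMod p) - 1 : AddMonoidAlgebra (ZMod p) (PG p f)) ∈ I) →
      (single (∑ j ∈ s, w j) (1:ZMod p) - 1 : AddMonoidAlgebra (ZMod p) (PG p f)) ∈ I := by
    intro s
    induction s using Finset.induction_on with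
    | empty => intro w _; simpa using hzero
    | insert _ _ hnotmem ih =>
      intro w hw
      rw [Finset.sum_insert hnotmem]
      exact hadd _ _ (hw _ (Finset.mem_insert_self _ _))
        (ih w fun j hj => hw j (Finset.mem_insert_of_mem hj))
  have := key Finset.univ (fun j => Pi.single j (a j)) (fun j _ => hsingle j (a j))
  rwa [Finset.univ_sum_single] at this

lemma vpow (hp : p.Prime) (j : ι) :
    ((single (Pi.single j 1) (1:ZMod p) - 1 : AddMonoidAlgebra (ZMod p) (PG p f))) ^ (p ^ f j) = 0 := by
  haveI : Fact p.Prime := ⟨hp⟩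
  haveI : CharP (AddMonoidAlgebra (ZMod p) (PG p f)) p :=
    charP_of_injective_ringHom
      (f := (AddMonoidAlgebra.singleZeroRingHom : ZMod p →+* AddMonoidAlgebra (ZMod p) (PG p f)))
      (fun x y h => by
        have := congrArg (fun q : AddMonoidAlgebra (ZMod p) (PG p f) => q.coeff 0) h
        simpa [AddMonoidAlgebra.coeff_single] using this) p
  rw [sub_pow_char_pow, AddMonoidAlgebra.single_pow, one_pow, one_pow]
  have h0 : ((p ^ f j) • Pi.single j 1 : PG p f) = 0 := by
    ext i
    by_cases hij : i = j
    · subst hij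
      simp only [Pi.smul_apply, Pi.single_eq_same, Pi.zero_apply, nsmul_eq_mul, mul_one]
      exact_mod_cast ZMod.natCast_self (p ^ f i)
    · simp [Pi.single_eq_of_ne hij]
  rw [h0, ← AddMonoidAlgebra.one_def, sub_self]

lemma olson (hp : p.Prime) (S : Multiset (PG p f))
    (hS : 1 + ∑ i, (p ^ f i - 1) ≤ Multiset.card S) :
    ∃ T ≤ S, T ≠ 0 ∧ T.sum = 0 := by
  haveI : Fact p.Prime := ⟨hp⟩
  by_contra hcon
  push_neg at hcon
  set l := S.toList with hl
  have hlS : (l : Multiset (PG p f)) = S := S.coe_toList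
  have hn : l.length = Multiset.card S := S.length_toList
  set n := l.length with hn'
  set g : Fin n → PG p f := l.get with hg
  set v : ι → AddMonoidAlgebra (ZMod p) (PG p f) :=
    fun j => single (Pi.single j 1) (1:ZMod p) - 1 with hv
  set P : AddMonoidAlgebra (ZMod p) (PG p f) :=
    ∏ i : Fin n, (single (g i) (1:ZMod p) - 1) with hP
  -- Claim A : P = 0
  have claimA : P = 0 := by
    have hmem := fun i : Fin n => umem p f hp.pos (g i)
    choose r hr using fun i : Fin n =>
      Ideal.mem_span_range_iff_exists_fun.mp (hmem i)
    have hri : ∀ i, ∑ j, r i j * v j = single (g i) 1 - 1 := fun i => by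
      rw [← hr i]
    have hP2 : P = ∏ i, ∑ j, r i j * v j :=
      Finset.prod_congr rfl fun i _ => (hri i).symm
    rw [hP2, Finset.prod_univ_sum]
    apply Finset.sum_eq_zero
    intro φ _
    rw [Finset.prod_mul_distrib]
    suffices h : (∏ i, v (φ i)) = 0 by rw [h, mul_zero]
    obtain ⟨j, hj⟩ : ∃ j, p ^ f j ≤ (Finset.univ.filter fun i => φ i = j).card := by
      by_contra hno
      push_neg at hno
      have h1 : (Finset.univ : Finset (Fin n)).card
          = ∑ j, (Finset.univ.filter fun i => φ i = j).card :=
        Finset.card_eq_sum_card_fiberwise (fun x _ => Finset.mem_univ _)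
      have h2 : ∑ j, (Finset.univ.filter fun i => φ i = j).card ≤ ∑ j, (p ^ f j - 1) :=
        Finset.sum_le_sum fun j _ => Nat.le_pred_of_lt (hno j)
      rw [Finset.card_univ, Fintype.card_fin] at h1
      omega
    rw [← Finset.prod_filter_mul_prod_filter_not Finset.univ (fun i => φ i = j)]
    have h3 : ∏ i ∈ Finset.univ.filter (fun i => φ i = j), v (φ i)
        = v j ^ (Finset.univ.filter fun i => φ i = j).card := by
      rw [Finset.prod_congr rfl fun i hi => by rw [(Finset.mem_filter.mp hi).2],
        Finset.prod_const]
    rw [h3, ← Nat.add_sub_cancel' hj, pow_add, vpow p f hp j, zero_mul, zero_mul]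
  -- Claim B : P ≠ 0
  have expand : P = ∑ t ∈ (Finset.univ : Finset (Fin n)).powerset,
      single (∑ i ∈ t, g i) ((-1 : ZMod p) ^ (n - t.card)) := by
    have h1 : ∀ i : Fin n, (single (g i) (1:ZMod p) - 1 : AddMonoidAlgebra (ZMod p) (PG p f))
        = single (g i) 1 + (-1) := fun i => by ring
    rw [hP, Finset.prod_congr rfl fun i _ => h1 i, Finset.prod_add]
    apply Finset.sum_congr rfl
    intro t ht
    rw [Finset.prod_const, AddMonoidAlgebra.prod_single, Finset.prod_const_one]
    have hcard : (Finset.univ \ t).card = n - t.card := by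
      rw [Finset.card_sdiff_of_subset (Finset.mem_powerset.mp ht), Finset.card_univ, Fintype.card_fin]
    rw [hcard]
    have hneg : (-1 : AddMonoidAlgebra (ZMod p) (PG p f)) = single 0 (-1) := by
      have := AddMonoidAlgebra.single_neg (0 : PG p f) (1 : ZMod p)
      rw [show (single (0:PG p f) (-1:ZMod p) : AddMonoidAlgebra (ZMod p) (PG p f))
            = -single 0 1 from this, ← AddMonoidAlgebra.one_def]
    rw [hneg, AddMonoidAlgebra.single_pow, AddMonoidAlgebra.single_mul_single, smul_zero,
      add_zero, one_mul]
  have hP0 : P.coeff 0 = (-1 : ZMod p) ^ n := by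
    rw [expand, AddMonoidAlgebra.coeff_sum, Finsupp.finset_sum_apply]
    rw [Finset.sum_eq_single_of_mem (∅ : Finset (Fin n))
      (Finset.mem_powerset.mpr (Finset.empty_subset _)) ?side]
    · simp [AddMonoidAlgebra.coeff_single]
    · intro t _ htne
      have hsum : (∑ i ∈ t, g i) ≠ 0 := by
        intro hzero
        have huvm : Multiset.map g Finset.univ.val = S := by
          rw [Fin.univ_def]
          show Multiset.map g (↑(List.finRange n)) = S
          rw [← hlS]
          exact congrArg _ (List.ext_getElem (by simp [hn']) (by simp) : (List.finRange n).map l.get = l)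
        refine hcon (t.val.map g) ?_ ?_ ?_
        · rw [← huvm]
          exact Multiset.map_le_map (Finset.val_le_iff.mpr (Finset.subset_univ t))
        · intro h
          exact htne (Finset.val_eq_zero.mp (Multiset.map_eq_zero.mp h))
        · exact hzero
      simp [AddMonoidAlgebra.coeff_single, Finsupp.single_apply, hsum]
  rw [claimA, AddMonoidAlgebra.coeff_zero, Finsupp.zero_apply] at hP0
  exact pow_ne_zero n (neg_ne_zero.mpr (one_ne_zero : (1:ZMod p) ≠ 0)) hP0.symm

end olson

lemma exp_eq (p : ℕ) {d : ℕ} (e : Fin (d+1) → ℕ) (hmono : Monotone e) :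
    AddMonoid.exponent (∀ i, ZMod (p ^ e i)) = p ^ e (Fin.last d) := by
  rw [AddMonoid.exponent_pi]
  simp only [ZMod.exponent]
  apply Nat.dvd_antisymm
  · exact Finset.lcm_dvd fun i _ => pow_dvd_pow p (hmono (Fin.le_last i))
  · exact Finset.dvd_lcm (Finset.mem_univ (Fin.last d))

lemma no_zs (p : ℕ) (hp : 1 < p) {ι : Type*} [Fintype ι] [DecidableEq ι] (f : ι → ℕ)
    (hf : ∀ i, 0 < f i) :
    ∃ S : Multiset (PG p f), Multiset.card S = ∑ i, (p ^ f i - 1) ∧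
      ∀ T ≤ S, T ≠ 0 → T.sum ≠ 0 := by
  have h2 : ∀ j, 1 < p ^ f j := fun j => Nat.one_lt_pow (hf j).ne' hp
  haveI : ∀ j, NeZero (p ^ f j) := fun j => ⟨by have := h2 j; omega⟩
  haveI : ∀ j, Nontrivial (ZMod (p ^ f j)) := fun j => haveI : Fact (1 < p ^ f j) := ⟨h2 j⟩; ZMod.nontrivial _
  set δ : ι → PG p f := fun j => Pi.single j 1 with hδ
  have hδinj : Function.Injective δ := by
    intro i j hij
    by_contra hne
    have := congrFun hij i
    rw [hδ] at this
    simp only [Pi.single_eq_same, Pi.single_eq_of_ne hne] at this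
    exact one_ne_zero this
  refine ⟨∑ j : ι, Multiset.replicate (p ^ f j - 1) (δ j), ?_, ?_⟩
  · have hc : ∀ s : Finset ι,
        Multiset.card (∑ j ∈ s, Multiset.replicate (p ^ f j - 1) (δ j))
          = ∑ j ∈ s, (p ^ f j - 1) := by
      intro s
      induction s using Finset.induction_on with
      | empty => simp
      | insert _ _ h ih => simp [Finset.sum_insert h, ih]
    exact hc _
  · intro T hT hTne hTsum
    have hcountS : ∀ j, Multiset.count (δ j)
        (∑ j' : ι, Multiset.replicate (p ^ f j' - 1) (δ j')) = p ^ f j - 1 := by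
      intro j
      rw [Multiset.count_sum', Finset.sum_eq_single j]
      · simp [Multiset.count_replicate]
      · intro j' _ hne
        rw [Multiset.count_replicate, if_neg (fun h => hne (hδinj h))]
      · intro h; exact absurd (Finset.mem_univ j) h
    have hmem : ∀ a ∈ T, ∃ j, a = δ j := by
      intro a ha
      have h3 := Multiset.mem_of_le hT ha
      rw [Multiset.mem_sum] at h3
      obtain ⟨j, _, hj⟩ := h3
      exact ⟨j, Multiset.eq_of_mem_replicate hj⟩
    set m : ι → ℕ := fun j => Multiset.count (δ j) T with hm
    have hTdec : T = ∑ j : ι, Multiset.replicate (m j) (δ j) := by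
      ext a
      rw [Multiset.count_sum']
      by_cases ha : ∃ j, a = δ j
      · obtain ⟨j, rfl⟩ := ha
        rw [Finset.sum_eq_single j]
        · simp [Multiset.count_replicate, hm]
        · intro j' _ hne
          rw [Multiset.count_replicate, if_neg (fun h => hne (hδinj h))]
        · intro h; exact absurd (Finset.mem_univ j) h
      · push_neg at ha
        rw [Multiset.count_eq_zero_of_notMem (fun hmem' => ha _ ((hmem a hmem').choose_spec.trans rfl))]
        · exact (Finset.sum_eq_zero fun j' _ => by
            rw [Multiset.count_replicate, if_neg (fun h => ha j' h.symm)]).symm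
    have hsum : T.sum = ∑ j : ι, (m j) • δ j := by
      rw [hTdec]
      have hs : ∀ s : Finset ι, (∑ j ∈ s, Multiset.replicate (m j) (δ j)).sum
          = ∑ j ∈ s, (m j) • δ j := by
        intro s
        induction s using Finset.induction_on with
        | empty => simp
        | insert _ _ h ih => simp [Finset.sum_insert h, ih, Multiset.sum_replicate]
      exact hs _
    have hmzero : ∀ j, m j = 0 := by
      intro j
      have h1 : T.sum j = (m j : ZMod (p ^ f j)) := by
        rw [hsum, Finset.sum_apply, Finset.sum_eq_single j]
        · simp [hδ, nsmul_eq_mul]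
        · intro j' _ hne
          simp [hδ, Pi.single_eq_of_ne (Ne.symm hne)]
        · intro h; exact absurd (Finset.mem_univ j) h
      rw [hTsum] at h1
      have hdvd : (p ^ f j) ∣ m j :=
        (ZMod.natCast_eq_zero_iff _ _).mp h1.symm
      have hle : m j ≤ p ^ f j - 1 :=
        le_trans (Multiset.count_le_of_le _ hT) (le_of_eq (hcountS j))
      have := h2 j
      by_contra h0
      have := Nat.le_of_dvd (Nat.pos_of_ne_zero h0) hdvd
      omega
    obtain ⟨a, ha⟩ := Multiset.exists_mem_of_ne_zero hTne
    obtain ⟨j, rfl⟩ := hmem a ha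
    have hpos' : 0 < m j := Multiset.count_pos.mpr ha
    rw [hmzero j] at hpos'
    exact lt_irrefl 0 hpos'

lemma hasDZS_one_iff {G : Type*} [AddCommGroup G] (S : Multiset G) :
    HasDZS 1 S ↔ ∃ T ≤ S, T ≠ 0 ∧ T.sum = 0 := by
  constructor
  · rintro ⟨L, hlen, hall, hle⟩
    rw [List.length_eq_one_iff] at hlen
    obtain ⟨T, rfl⟩ := hlen
    exact ⟨T, by simpa using hle, (hall T (by simp)).1, (hall T (by simp)).2⟩
  · rintro ⟨T, hle, hne, hsum⟩
    exact ⟨[T], rfl, by simp [hne, hsum], by simpa using hle⟩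

lemma hasShortDZS_one_iff {G : Type*} [AddCommGroup G] (S : Multiset G) :
    HasShortDZS 1 S ↔
      ∃ T ≤ S, T ≠ 0 ∧ T.sum = 0 ∧ Multiset.card T ≤ AddMonoid.exponent G := by
  constructor
  · rintro ⟨L, hlen, hall, hle⟩
    rw [List.length_eq_one_iff] at hlen
    obtain ⟨T, rfl⟩ := hlen
    exact ⟨T, by simpa using hle, (hall T (by simp)).1, (hall T (by simp)).2.1,
      (hall T (by simp)).2.2⟩
  · rintro ⟨T, hle, hne, hsum, hcard⟩
    exact ⟨[T], rfl, by simp [hne, hsum, hcard], by simpa using hle⟩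

lemma exists_le_card {α : Type*} (S : Multiset α) (K : ℕ) (h : K ≤ Multiset.card S) :
    ∃ S' ≤ S, Multiset.card S' = K := by
  refine ⟨(S.toList.take K : Multiset α), ?_, ?_⟩
  · conv_rhs => rw [← S.coe_toList]
    exact Multiset.coe_le.mpr (S.toList.take_sublist K).subperm
  · rw [Multiset.coe_card, List.length_take, S.length_toList]
    omega

lemma dav_eq (p : ℕ) (hp : p.Prime) {ι : Type*} [Fintype ι] [DecidableEq ι] (f : ι → ℕ)
    (hf : ∀ i, 0 < f i) :
    DavR (PG p f) 1 = 1 + ∑ i, (p ^ f i - 1) := by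
  have hmem : (1 + ∑ i, (p ^ f i - 1)) ∈
      {k | 0 < k ∧ ∀ S : Multiset (PG p f), k ≤ Multiset.card S → HasDZS 1 S} := by
    refine ⟨by omega, fun S hS => (hasDZS_one_iff S).mpr ?_⟩
    exact olson p f hp S hS
  apply le_antisymm
  · exact Nat.sInf_le hmem
  · refine le_csInf ⟨_, hmem⟩ ?_
    rintro k ⟨hk0, hk⟩
    by_contra hlt
    push_neg at hlt
    obtain ⟨S, hScard, hSno⟩ := no_zs p hp.one_lt f hf
    have := hk S (by omega)
    rw [hasDZS_one_iff] at this
    obtain ⟨T, hle, hne, hsum⟩ := this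
    exact hSno T hle hne hsum

lemma eta_mem (p d : ℕ) (hp : p.Prime) (e : Fin (d + 1) → ℕ)
    (hbig : 1 + ∑ i : Fin d, (p ^ e i.castSucc - 1) ≤ p ^ e (Fin.last d))
    (S : Multiset (PG p e))
    (hcard : 2 * p ^ e (Fin.last d) + ∑ i : Fin d, (p ^ e i.castSucc - 1)
      ≤ Multiset.card S) :
    ∃ T ≤ S, T ≠ 0 ∧ T.sum = 0 ∧ Multiset.card T ≤ p ^ e (Fin.last d) := by
  classical
  set m := p ^ e (Fin.last d) with hm
  set Sig := ∑ i : Fin d, (p ^ e i.castSucc - 1) with hSig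
  have hm1 : 0 < m := pow_pos hp.pos _
  have hsumsplit : ∑ i : Fin (d+1), (p ^ e i - 1) = Sig + (m - 1) := by
    rw [Fin.sum_univ_castSucc]
  obtain ⟨S', hS'le, hS'card⟩ := exists_le_card S (2*m + Sig) hcard
  set f' : Option (Fin (d+1)) → ℕ := fun o => Option.casesOn o (e (Fin.last d)) e with hf'
  set L : PG p e → PG p f' := fun g o =>
    Option.casesOn (motive := fun o => ZMod (p ^ f' o)) o 1 (fun i => g i) with hL
  have hofn : ∑ o : Option (Fin (d+1)), (p ^ f' o - 1) = (m - 1) + (Sig + (m - 1)) := by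
    rw [Fintype.sum_option, hsumsplit]
  have holson := olson p f' hp (S'.map L)
    (by rw [Multiset.card_map, hS'card, hofn]; omega)
  obtain ⟨T', hT'le, hT'ne, hT'sum⟩ := holson
  obtain ⟨T, hTle, rfl⟩ := exists_le_map hT'le
  have hTne : T ≠ 0 := fun h => hT'ne (by simp [h])
  have hTsum : T.sum = 0 := by
    funext i
    have h1 := congrFun hT'sum (some i)
    rw [msum_apply, Multiset.map_map] at h1
    rw [msum_apply]
    exact h1
  have hdvd : m ∣ Multiset.card T := by
    have h1 := congrFun hT'sum none
    rw [msum_apply, Multiset.map_map] at h1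
    have h2 : Multiset.map ((fun g => g none) ∘ L) T
        = Multiset.replicate (Multiset.card T) (1 : ZMod (p ^ f' none)) :=
      Multiset.map_const' T 1
    rw [h2, Multiset.sum_replicate, nsmul_eq_mul, mul_one] at h1
    exact (ZMod.natCast_eq_zero_iff _ _).mp h1
  have hTcardle : Multiset.card T ≤ 2*m + Sig := by
    have := Multiset.card_le_card hT'le
    rw [Multiset.card_map, Multiset.card_map, hS'card] at this
    exact this
  have hTcne : Multiset.card T ≠ 0 := fun h => hTne (Multiset.card_eq_zero.mp h)
  have hSm : Sig + 1 ≤ m := by omega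
  obtain ⟨c, hc⟩ := hdvd
  have hc3 : c < 3 := by
    by_contra hge
    push_neg at hge
    have : m * 3 ≤ m * c := Nat.mul_le_mul_left m hge
    omega
  interval_cases c
  · omega
  · exact ⟨T, hTle.trans hS'le, hTne, hTsum, by omega⟩
  · -- card T = 2m
    obtain ⟨W, hWle, hWcard⟩ := exists_le_card T (2*m - 1) (by omega)
    have hOl2 := olson p e hp W (by rw [hWcard, hsumsplit]; omega)
    obtain ⟨T₁, hT₁le, hT₁ne, hT₁sum⟩ := hOl2
    have hT₁T : T₁ ≤ T := hT₁le.trans hWle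
    have hcard₁ : Multiset.card T₁ ≤ 2*m - 1 := hWcard ▸ Multiset.card_le_card hT₁le
    by_cases hsm : Multiset.card T₁ ≤ m
    · exact ⟨T₁, hT₁T.trans (hTle.trans hS'le), hT₁ne, hT₁sum, hsm⟩
    · have hadd : (T - T₁) + T₁ = T := tsub_add_cancel_of_le hT₁T
      have h5 : (T - T₁).sum + T₁.sum = T.sum := by rw [← Multiset.sum_add, hadd]
      rw [hT₁sum, add_zero, hTsum] at h5
      have hcard₂ : Multiset.card (T - T₁) = Multiset.card T - Multiset.card T₁ :=
        Multiset.card_sub hT₁T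
      have hcard₁' : 0 < Multiset.card T₁ :=
        Multiset.card_pos.mpr (fun h => hT₁ne h)
      refine ⟨T - T₁, (tsub_le_self).trans (hTle.trans (hS'le)), ?_, h5, by omega⟩
      intro h
      have := congrArg Multiset.card h
      rw [hcard₂, Multiset.card_zero] at this
      omega

/-- For a `p`-group `G = C_{p^{e_1}} × ⋯ × C_{p^{e_{d+1}}}` with
`e_1 ≤ ⋯ ≤ e_{d+1}` and `p^{e_{d+1}} ≥ 1 + ∑_{i≤d}(p^{e_i}-1)`, we have
`η(G) ≤ D(G) + exp(G) = 2p^{e_{d+1}} + ∑_{i≤d} p^{e_i} - d`. -/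
theorem stmt_12 (p d : ℕ) (hp : p.Prime) (e : Fin (d + 1) → ℕ)
    (hpos : ∀ i, 0 < e i) (hmono : Monotone e)
    (hbig : 1 + ∑ i : Fin d, (p ^ e i.castSucc - 1) ≤ p ^ e (Fin.last d)) :
    EtaR (∀ i, ZMod (p ^ e i)) 1 ≤
        DavR (∀ i, ZMod (p ^ e i)) 1 + AddMonoid.exponent (∀ i, ZMod (p ^ e i)) ∧
      DavR (∀ i, ZMod (p ^ e i)) 1 + AddMonoid.exponent (∀ i, ZMod (p ^ e i)) =
        2 * p ^ e (Fin.last d) + ∑ i : Fin d, (p ^ e i.castSucc - 1) := by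
  classical
  have hexp : AddMonoid.exponent (∀ i, ZMod (p ^ e i)) = p ^ e (Fin.last d) :=
    exp_eq p e hmono
  have hdav : DavR (∀ i, ZMod (p ^ e i)) 1 = 1 + ∑ i, (p ^ e i - 1) :=
    dav_eq p hp e hpos
  have hm1 : 0 < p ^ e (Fin.last d) := pow_pos hp.pos _
  have hsplit : ∑ i : Fin (d+1), (p ^ e i - 1)
      = (∑ i : Fin d, (p ^ e i.castSucc - 1)) + (p ^ e (Fin.last d) - 1) :=
    Fin.sum_univ_castSucc _
  have heq : DavR (∀ i, ZMod (p ^ e i)) 1 + AddMonoid.exponent (∀ i, ZMod (p ^ e i)) =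
      2 * p ^ e (Fin.last d) + ∑ i : Fin d, (p ^ e i.castSucc - 1) := by
    rw [hdav, hexp, hsplit]; omega
  refine ⟨?_, heq⟩
  rw [heq]
  apply Nat.sInf_le
  refine ⟨by omega, fun S hS => ?_⟩
  rw [hasShortDZS_one_iff]
  obtain ⟨T, h1, h2, h3, h4⟩ := eta_mem p d hp e hbig S hS
  exact ⟨T, h1, h2, h3, by rw [hexp]; exact h4⟩
end
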